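/- Any formal power series f ∈ ℤ[[x]] with constant term 1 admits a unique expansion f(x) = ∏_{j≥1} (1 + x^{2j−1})^{c_{2j−1}} · (1 − x^{2j})^{−c_{2j}} with integers c_n, where the factors are formal binomial series. -/

import Mathlib

open PowerSeries Finset

namespace Stmt9

/-- generic binomial factor -/
noncomputable def fac (ε : ℤ) (n m : ℕ) : PowerSeries ℤ :=
  ((1 : PowerSeries ℤ) + C ε * X ^ n) ^ m

lemma one_sub_eq (n : ℕ) : (1 : PowerSeries ℤ) - X ^ n = 1 + C (-1) * X ^ n := by
  rw [map_neg, map_one, neg_one_mul, sub_eq_add_neg]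

lemma coeff_fac (ε : ℤ) (n m k : ℕ) (hn : 0 < n) :
    coeff k (fac ε n m) =
      ∑ i ∈ range (m + 1), ε ^ i * (m.choose i) * (if k = n * i then 1 else 0) := by
  rw [fac, add_comm, add_pow]
  simp only [one_pow, mul_one, map_sum]
  refine Finset.sum_congr rfl fun i _ => ?_
  rw [mul_pow, ← map_pow, ← pow_mul, ← map_natCast C (m.choose i), mul_right_comm,
    ← map_mul, coeff_C_mul, coeff_X_pow]

lemma coeff_fac_zero (ε : ℤ) (n m : ℕ) (hn : 0 < n) :
    coeff 0 (fac ε n m) = 1 := by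
  rw [coeff_fac ε n m 0 hn]
  rw [Finset.sum_eq_single 0]
  · simp
  · intro i hi hi0
    have h : n * i ≠ 0 := Nat.mul_ne_zero (by omega) hi0
    rw [if_neg (fun hh => h hh.symm), mul_zero]
  · simp

lemma coeff_fac_lt (ε : ℤ) (n m k : ℕ) (h0 : 0 < k) (hk : k < n) :
    coeff k (fac ε n m) = 0 := by
  rw [coeff_fac ε n m k (h0.trans hk)]
  apply Finset.sum_eq_zero
  intro i _
  have hne : k ≠ n * i := by
    rcases Nat.eq_zero_or_pos i with h | h
    · subst h; omega
    · have := Nat.le_mul_of_pos_right n h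
      have := Nat.mul_le_mul_left n h
      nlinarith
  rw [if_neg hne, mul_zero]

lemma coeff_fac_self (ε : ℤ) (n m : ℕ) (hn : 0 < n) :
    coeff n (fac ε n m) = ε * m := by
  rw [coeff_fac ε n m n hn]
  rcases Nat.eq_zero_or_pos m with rfl | hm
  · rw [Finset.sum_range_one]
    rw [mul_zero, if_neg hn.ne']
    simp
  · rw [Finset.sum_eq_single 1]
    · simp
    · intro i hi hi1
      have hne : n ≠ n * i := by
        rcases Nat.eq_zero_or_pos i with h | h
        · subst h; omega
        · have h2 : 2 ≤ i := by omega
          have := Nat.mul_le_mul_left n h2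
          omega
      rw [if_neg hne, mul_zero]
    · intro h
      simp only [mem_range] at h
      omega

/-- multiplying by a series whose coefficients vanish in `(0,n)` : low coefficients -/
lemma coeff_mul_low {P Q : PowerSeries ℤ} {n : ℕ} (hQ0 : coeff 0 Q = 1)
    (hQ : ∀ j, 0 < j → j < n → coeff j Q = 0) {k : ℕ} (hk : k < n) :
    coeff k (P * Q) = coeff k P := by
  rw [coeff_mul, Finset.Nat.sum_antidiagonal_eq_sum_range_succ_mk]
  rw [Finset.sum_eq_single k]
  · simp [hQ0]
  · intro i hi hik
    simp only [mem_range] at hi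
    rw [hQ (k - i) (by omega) (by omega), mul_zero]
  · intro h
    simp at h

lemma coeff_mul_top {P Q : PowerSeries ℤ} {n : ℕ} (hn : 0 < n) (hQ0 : coeff 0 Q = 1)
    (hQ : ∀ j, 0 < j → j < n → coeff j Q = 0) :
    coeff n (P * Q) = coeff n P + coeff 0 P * coeff n Q := by
  rw [coeff_mul, Finset.Nat.sum_antidiagonal_eq_sum_range_succ_mk, Finset.sum_range_succ,
    Nat.sub_self, hQ0, mul_one]
  rw [Finset.sum_eq_single 0]
  · rw [Nat.sub_zero, add_comm]
  · intro i hi hi0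
    simp only [mem_range] at hi
    rw [hQ (n - i) (by omega) (by omega), mul_zero]
  · intro h
    simp only [mem_range] at h
    omega

/-- The factor appearing on the `f`-side. -/
noncomputable def fA (c : ℕ → ℤ) (n : ℕ) : PowerSeries ℤ :=
  if Odd n then ((1 : PowerSeries ℤ) + X ^ n) ^ (-(c n)).toNat
  else ((1 : PowerSeries ℤ) - X ^ n) ^ (c n).toNat

/-- The factor appearing on the other side. -/
noncomputable def fB (c : ℕ → ℤ) (n : ℕ) : PowerSeries ℤ :=
  if Odd n then ((1 : PowerSeries ℤ) + X ^ n) ^ (c n).toNat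
  else ((1 : PowerSeries ℤ) - X ^ n) ^ (-(c n)).toNat

lemma fA_eq_fac (c : ℕ → ℤ) (n : ℕ) :
    fA c n = if Odd n then fac 1 n (-(c n)).toNat else fac (-1) n (c n).toNat := by
  unfold fA fac
  split_ifs
  · rw [map_one, one_mul]
  · rw [one_sub_eq]

lemma fB_eq_fac (c : ℕ → ℤ) (n : ℕ) :
    fB c n = if Odd n then fac 1 n (c n).toNat else fac (-1) n (-(c n)).toNat := by
  unfold fB fac
  split_ifs
  · rw [map_one, one_mul]
  · rw [one_sub_eq]

lemma coeff_fA_zero (c : ℕ → ℤ) (n : ℕ) (hn : 0 < n) : coeff 0 (fA c n) = 1 := by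
  rw [fA_eq_fac]; split_ifs <;> exact coeff_fac_zero _ _ _ hn

lemma coeff_fB_zero (c : ℕ → ℤ) (n : ℕ) (hn : 0 < n) : coeff 0 (fB c n) = 1 := by
  rw [fB_eq_fac]; split_ifs <;> exact coeff_fac_zero _ _ _ hn

lemma coeff_fA_lt (c : ℕ → ℤ) (n k : ℕ) (h0 : 0 < k) (hk : k < n) :
    coeff k (fA c n) = 0 := by
  rw [fA_eq_fac]; split_ifs <;> exact coeff_fac_lt _ _ _ _ h0 hk

lemma coeff_fB_lt (c : ℕ → ℤ) (n k : ℕ) (h0 : 0 < k) (hk : k < n) :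
    coeff k (fB c n) = 0 := by
  rw [fB_eq_fac]; split_ifs <;> exact coeff_fac_lt _ _ _ _ h0 hk

lemma coeff_fB_sub_fA (c : ℕ → ℤ) (n : ℕ) (hn : 0 < n) :
    coeff n (fB c n) - coeff n (fA c n) = c n := by
  rw [fA_eq_fac, fB_eq_fac]
  split_ifs <;>
    rw [coeff_fac_self _ _ _ hn, coeff_fac_self _ _ _ hn] <;> omega

/-- the `f`-side product at stage `N` -/
noncomputable def PA (f : PowerSeries ℤ) (c : ℕ → ℤ) (N : ℕ) : PowerSeries ℤ :=
  f * ∏ n ∈ Icc 1 N, fA c n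

/-- the other side product at stage `N` -/
noncomputable def PB (c : ℕ → ℤ) (N : ℕ) : PowerSeries ℤ :=
  ∏ n ∈ Icc 1 N, fB c n

lemma PA_succ (f : PowerSeries ℤ) (c : ℕ → ℤ) (N : ℕ) :
    PA f c (N + 1) = PA f c N * fA c (N + 1) := by
  rw [PA, PA, prod_Icc_succ_top (by omega), mul_assoc]

lemma PB_succ (c : ℕ → ℤ) (N : ℕ) :
    PB c (N + 1) = PB c N * fB c (N + 1) := by
  rw [PB, PB, prod_Icc_succ_top (by omega)]

lemma coeff_PA_zero (f : PowerSeries ℤ) (hf : constantCoeff f = 1) (c : ℕ → ℤ) (N : ℕ) :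
    coeff 0 (PA f c N) = 1 := by
  rw [PA, coeff_zero_eq_constantCoeff, map_mul, hf, one_mul, map_prod]
  apply Finset.prod_eq_one
  intro n hn
  simp only [mem_Icc] at hn
  rw [← coeff_zero_eq_constantCoeff_apply]
  exact coeff_fA_zero c n (by omega)

lemma coeff_PB_zero (c : ℕ → ℤ) (N : ℕ) : coeff 0 (PB c N) = 1 := by
  rw [PB, coeff_zero_eq_constantCoeff, map_prod]
  apply Finset.prod_eq_one
  intro n hn
  simp only [mem_Icc] at hn
  rw [← coeff_zero_eq_constantCoeff_apply]
  exact coeff_fB_zero c n (by omega)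

/-- the condition at stage `N`, coefficient form -/
def Cond (f : PowerSeries ℤ) (c : ℕ → ℤ) (N : ℕ) : Prop :=
  ∀ k ≤ N, coeff k (PA f c N) = coeff k (PB c N)

/-- the forced value of `c (N+1)` -/
noncomputable def D (f : PowerSeries ℤ) (c : ℕ → ℤ) (N : ℕ) : ℤ :=
  coeff (N + 1) (PA f c N) - coeff (N + 1) (PB c N)

lemma cond_zero (f : PowerSeries ℤ) (hf : constantCoeff f = 1) (c : ℕ → ℤ) :
    Cond f c 0 := by
  intro k hk
  interval_cases k
  rw [coeff_PA_zero f hf, coeff_PB_zero]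

lemma cond_succ_iff (f : PowerSeries ℤ) (hf : constantCoeff f = 1) (c : ℕ → ℤ) (N : ℕ) :
    Cond f c (N + 1) ↔ Cond f c N ∧ c (N + 1) = D f c N := by
  have hA0 := coeff_fA_zero c (N + 1) (by omega)
  have hB0 := coeff_fB_zero c (N + 1) (by omega)
  have hAlt : ∀ j, 0 < j → j < N + 1 → coeff j (fA c (N + 1)) = 0 :=
    fun j h0 hj => coeff_fA_lt c (N + 1) j h0 hj
  have hBlt : ∀ j, 0 < j → j < N + 1 → coeff j (fB c (N + 1)) = 0 :=
    fun j h0 hj => coeff_fB_lt c (N + 1) j h0 hj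
  have hlowA : ∀ k ≤ N, coeff k (PA f c (N + 1)) = coeff k (PA f c N) := by
    intro k hk
    rw [PA_succ]
    exact coeff_mul_low hA0 hAlt (by omega)
  have hlowB : ∀ k ≤ N, coeff k (PB c (N + 1)) = coeff k (PB c N) := by
    intro k hk
    rw [PB_succ]
    exact coeff_mul_low hB0 hBlt (by omega)
  have htopA : coeff (N + 1) (PA f c (N + 1)) =
      coeff (N + 1) (PA f c N) + coeff (N + 1) (fA c (N + 1)) := by
    rw [PA_succ, coeff_mul_top (by omega) hA0 hAlt, coeff_PA_zero f hf, one_mul]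
  have htopB : coeff (N + 1) (PB c (N + 1)) =
      coeff (N + 1) (PB c N) + coeff (N + 1) (fB c (N + 1)) := by
    rw [PB_succ, coeff_mul_top (by omega) hB0 hBlt, coeff_PB_zero, one_mul]
  have hsub := coeff_fB_sub_fA c (N + 1) (by omega)
  constructor
  · intro h
    have hCN : Cond f c N := by
      intro k hk
      rw [← hlowA k hk, ← hlowB k hk]
      exact h k (by omega)
    refine ⟨hCN, ?_⟩
    have := h (N + 1) le_rfl
    rw [htopA, htopB] at this
    unfold D
    omega
  · rintro ⟨hCN, hD⟩
    intro k hk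
    rcases Nat.lt_or_ge k (N + 1) with hk' | hk'
    · rw [hlowA k (by omega), hlowB k (by omega)]
      exact hCN k (by omega)
    · have : k = N + 1 := by omega
      subst this
      rw [htopA, htopB]
      unfold D at hD
      omega

lemma PA_congr (f : PowerSeries ℤ) {c d : ℕ → ℤ} (N : ℕ)
    (h : ∀ n, 1 ≤ n → n ≤ N → c n = d n) : PA f c N = PA f d N := by
  unfold PA
  congr 1
  apply Finset.prod_congr rfl
  intro n hn
  simp only [mem_Icc] at hn
  unfold fA
  rw [h n hn.1 hn.2]

lemma PB_congr {c d : ℕ → ℤ} (N : ℕ)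
    (h : ∀ n, 1 ≤ n → n ≤ N → c n = d n) : PB c N = PB d N := by
  unfold PB
  apply Finset.prod_congr rfl
  intro n hn
  simp only [mem_Icc] at hn
  unfold fB
  rw [h n hn.1 hn.2]

lemma D_congr (f : PowerSeries ℤ) {c d : ℕ → ℤ} (N : ℕ)
    (h : ∀ n, 1 ≤ n → n ≤ N → c n = d n) : D f c N = D f d N := by
  unfold D
  rw [PA_congr f N h, PB_congr N h]

/-- stagewise approximations -/
noncomputable def gs (f : PowerSeries ℤ) : ℕ → (ℕ → ℤ)
  | 0 => fun _ => 0
  | N + 1 => Function.update (gs f N) (N + 1) (D f (gs f N) N)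

/-- the solution sequence -/
noncomputable def csol (f : PowerSeries ℤ) : ℕ → ℤ := fun n => gs f n n

lemma gs_agree (f : PowerSeries ℤ) : ∀ N k, k ≤ N → gs f N k = csol f k := by
  intro N
  induction N with
  | zero =>
    intro k hk
    interval_cases k
    rfl
  | succ N ih =>
    intro k hk
    rcases Nat.lt_or_ge k (N + 1) with h | h
    · rw [gs, Function.update_of_ne (by omega)]
      exact ih k (by omega)
    · have : k = N + 1 := by omega
      subst this
      rfl

lemma csol_zero (f : PowerSeries ℤ) : csol f 0 = 0 := rfl

lemma csol_succ (f : PowerSeries ℤ) (N : ℕ) : csol f (N + 1) = D f (csol f) N := by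
  show gs f (N + 1) (N + 1) = _
  rw [gs, Function.update_self]
  exact D_congr f N fun n h1 h2 => gs_agree f N n h2

lemma csol_cond (f : PowerSeries ℤ) (hf : constantCoeff f = 1) (N : ℕ) :
    Cond f (csol f) N := by
  induction N with
  | zero => exact cond_zero f hf _
  | succ N ih => exact (cond_succ_iff f hf _ N).mpr ⟨ih, csol_succ f N⟩

lemma unique_aux (f : PowerSeries ℤ) (hf : constantCoeff f = 1)
    {c d : ℕ → ℤ} (hc0 : c 0 = 0) (hd0 : d 0 = 0)
    (hc : ∀ N, Cond f c N) (hd : ∀ N, Cond f d N) : c = d := by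
  funext n
  induction n using Nat.strong_induction_on with
  | _ n ih =>
    match n with
    | 0 => rw [hc0, hd0]
    | N + 1 =>
      have hagree : ∀ m, 1 ≤ m → m ≤ N → c m = d m := fun m h1 h2 => ih m (by omega)
      have h1 := ((cond_succ_iff f hf c N).mp (hc (N + 1))).2
      have h2 := ((cond_succ_iff f hf d N).mp (hd (N + 1))).2
      rw [h1, h2, D_congr f N hagree]

end Stmt9

open Stmt9 in
/-- Any `f ∈ ℤ[[x]]` with constant term 1 admits a unique expansion
`f(x) = ∏_{j≥1} (1 + x^{2j−1})^{c_{2j−1}} (1 − x^{2j})^{−c_{2j}}` with `c_n ∈ ℤ`,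
stated via truncations: negatively-exponentiated factors are moved to the other side. -/
theorem stmt_9 (f : PowerSeries ℤ) (hf : PowerSeries.constantCoeff f = 1) :
    ∃! c : ℕ → ℤ, c 0 = 0 ∧ ∀ N : ℕ,
      PowerSeries.trunc (N + 1)
          (f * ∏ n ∈ Finset.Icc 1 N,
            if Odd n then ((1 : PowerSeries ℤ) + X ^ n) ^ (-(c n)).toNat
            else ((1 : PowerSeries ℤ) - X ^ n) ^ (c n).toNat) =
        PowerSeries.trunc (N + 1)
          (∏ n ∈ Finset.Icc 1 N,
            if Odd n then ((1 : PowerSeries ℤ) + X ^ n) ^ (c n).toNat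
            else ((1 : PowerSeries ℤ) - X ^ n) ^ (-(c n)).toNat) := by
  have key : ∀ c : ℕ → ℤ, ∀ N : ℕ,
      (PowerSeries.trunc (N + 1)
          (f * ∏ n ∈ Finset.Icc 1 N,
            if Odd n then ((1 : PowerSeries ℤ) + X ^ n) ^ (-(c n)).toNat
            else ((1 : PowerSeries ℤ) - X ^ n) ^ (c n).toNat) =
        PowerSeries.trunc (N + 1)
          (∏ n ∈ Finset.Icc 1 N,
            if Odd n then ((1 : PowerSeries ℤ) + X ^ n) ^ (c n).toNat
            else ((1 : PowerSeries ℤ) - X ^ n) ^ (-(c n)).toNat)) ↔ Cond f c N := by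
    intro c N
    have hPA : (f * ∏ n ∈ Finset.Icc 1 N,
        if Odd n then ((1 : PowerSeries ℤ) + X ^ n) ^ (-(c n)).toNat
        else ((1 : PowerSeries ℤ) - X ^ n) ^ (c n).toNat) = PA f c N := rfl
    have hPB : (∏ n ∈ Finset.Icc 1 N,
        if Odd n then ((1 : PowerSeries ℤ) + X ^ n) ^ (c n).toNat
        else ((1 : PowerSeries ℤ) - X ^ n) ^ (-(c n)).toNat) = PB c N := rfl
    rw [hPA, hPB]
    constructor
    · intro h k hk
      have := Polynomial.ext_iff.mp h k
      rwa [PowerSeries.coeff_trunc, PowerSeries.coeff_trunc, if_pos (by omega),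
        if_pos (by omega)] at this
    · intro h
      ext k
      rw [PowerSeries.coeff_trunc, PowerSeries.coeff_trunc]
      split_ifs with hk
      · exact h k (by omega)
      · rfl
  refine ⟨csol f, ⟨csol_zero f, fun N => (key _ N).mpr (csol_cond f hf N)⟩, ?_⟩
  rintro c ⟨hc0, hc⟩
  exact unique_aux f hf hc0 (csol_zero f) (fun N => (key c N).mp (hc N))
    (csol_cond f hf)
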